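/- Let A be a real square matrix all of whose eigenvalues have negative real part (Hurwitz). Then there exists a positive definite symmetric matrix P such that AᵀP + PA is negative definite. -/

import Mathlib

open Matrix

/-- `μ` is a (complex) eigenvalue of the matrix `A`. -/
def isEig {n : ℕ} (A : Matrix (Fin n) (Fin n) ℂ) (μ : ℂ) : Prop :=
  ∃ v : Fin n → ℂ, v ≠ 0 ∧ A.mulVec v = μ • v

/-- A real matrix is Hurwitz if all of its eigenvalues have negative real part. -/
def IsHurwitz {n : ℕ} (A : Matrix (Fin n) (Fin n) ℝ) : Prop :=
  ∀ μ : ℂ, isEig (A.map Complex.ofReal) μ → μ.re < 0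

/-- Positive definiteness of the quadratic form of `P`. -/
def PosDefQ {n : ℕ} (P : Matrix (Fin n) (Fin n) ℝ) : Prop :=
  ∀ x : Fin n → ℝ, x ≠ 0 → 0 < x ⬝ᵥ P.mulVec x

/-- Negative definiteness of the quadratic form of `P`. -/
def NegDefQ {n : ℕ} (P : Matrix (Fin n) (Fin n) ℝ) : Prop :=
  ∀ x : Fin n → ℝ, x ≠ 0 → x ⬝ᵥ P.mulVec x < 0

namespace LyapunovAux

open NormedSpace Filter MeasureTheory Set Topology Nat

variable {n : ℕ}

/-- `M ↦ M.mulVec v` as an `ℝ`-linear map (complex entries). -/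
noncomputable def evC (v : Fin n → ℂ) : Matrix (Fin n) (Fin n) ℂ →ₗ[ℝ] (Fin n → ℂ) where
  toFun M := M.mulVec v
  map_add' M N := Matrix.add_mulVec M N v
  map_smul' c M := by
    ext i
    simp [Matrix.mulVec, dotProduct, Finset.smul_sum, smul_mul_assoc, Finset.mul_sum, mul_assoc]

/-- `M ↦ M.mulVec v` as an `ℝ`-linear map (real entries). -/
noncomputable def evR (v : Fin n → ℝ) : Matrix (Fin n) (Fin n) ℝ →ₗ[ℝ] (Fin n → ℝ) where
  toFun M := M.mulVec v
  map_add' M N := Matrix.add_mulVec M N v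
  map_smul' c M := by
    ext i
    simp [Matrix.mulVec, dotProduct, Finset.smul_sum, smul_mul_assoc, Finset.mul_sum, mul_assoc]

theorem exp_mulVec_eq_sum (N : Matrix (Fin n) (Fin n) ℂ) (v : Fin n → ℂ) (k : ℕ)
    (hv : ∀ j, k ≤ j → (N ^ j).mulVec v = 0) :
    (NormedSpace.exp N).mulVec v = ∑ j ∈ Finset.range k, ((j ! : ℝ)⁻¹) • (N ^ j).mulVec v := by
  letI : SeminormedRing (Matrix (Fin n) (Fin n) ℂ) := Matrix.linftyOpSemiNormedRing
  letI : NormedRing (Matrix (Fin n) (Fin n) ℂ) := Matrix.linftyOpNormedRing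
  letI : NormedAlgebra ℝ (Matrix (Fin n) (Fin n) ℂ) := Matrix.linftyOpNormedAlgebra
  have hsum : HasSum (fun j : ℕ => (j ! : ℝ)⁻¹ • N ^ j) (NormedSpace.exp N) := exp_series_hasSum_exp' N
  have h2 := hsum.mapL (evC v).toContinuousLinearMap
  have h3 : HasSum (fun j : ℕ => (j ! : ℝ)⁻¹ • (N ^ j).mulVec v) ((NormedSpace.exp N).mulVec v) := by
    simpa [evC, _root_.map_smul] using h2
  rw [← h3.tsum_eq]
  refine tsum_eq_sum fun j hj => ?_
  rw [hv j (Nat.le_of_not_lt (by simpa using hj)), smul_zero]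

theorem norm_exp_mulVec_le (Ac : Matrix (Fin n) (Fin n) ℂ) (μ : ℂ) (k : ℕ) (v : Fin n → ℂ)
    (hv : ((Ac - μ • 1) ^ k).mulVec v = 0) {t : ℝ} (ht : 0 ≤ t) :
    ‖(NormedSpace.exp (t • Ac)).mulVec v‖ ≤
      Real.exp (t * μ.re) *
        ∑ j ∈ Finset.range k, t ^ j * (j ! : ℝ)⁻¹ * ‖((Ac - μ • 1) ^ j).mulVec v‖ := by
  letI : SeminormedRing (Matrix (Fin n) (Fin n) ℂ) := Matrix.linftyOpSemiNormedRing
  letI : NormedRing (Matrix (Fin n) (Fin n) ℂ) := Matrix.linftyOpNormedRing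
  letI : NormedAlgebra ℝ (Matrix (Fin n) (Fin n) ℂ) := Matrix.linftyOpNormedAlgebra
  letI : NormedAlgebra ℂ (Matrix (Fin n) (Fin n) ℂ) := Matrix.linftyOpNormedAlgebra
  set N : Matrix (Fin n) (Fin n) ℂ := Ac - μ • 1 with hNdef
  have hsplit : t • Ac = t • (μ • (1 : Matrix (Fin n) (Fin n) ℂ)) + t • N := by
    rw [← smul_add]
    congr 1
    rw [hNdef]
    abel
  have hcomm : Commute (t • (μ • (1 : Matrix (Fin n) (Fin n) ℂ))) (t • N) :=
    (((Commute.one_left N).smul_left μ).smul_left t).smul_right t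
  have hscal : t • (μ • (1 : Matrix (Fin n) (Fin n) ℂ))
      = algebraMap ℂ (Matrix (Fin n) (Fin n) ℂ) ((t : ℂ) * μ) := by
    rw [Algebra.algebraMap_eq_smul_one, mul_smul,
      show ((t : ℂ)) = algebraMap ℝ ℂ t from rfl, algebraMap_smul]
  have hexpscal : NormedSpace.exp (t • (μ • (1 : Matrix (Fin n) (Fin n) ℂ)))
      = Complex.exp ((t : ℂ) * μ) • (1 : Matrix (Fin n) (Fin n) ℂ) := by
    rw [hscal]
    erw [← map_exp (algebraMap ℂ (Matrix (Fin n) (Fin n) ℂ)) (continuous_algebraMap _ _),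
      Algebra.algebraMap_eq_smul_one]
    congr 1
    rw [Complex.exp_eq_exp_ℂ]
  have hexp : (NormedSpace.exp (t • Ac)).mulVec v
      = Complex.exp ((t : ℂ) * μ) • (NormedSpace.exp (t • N)).mulVec v := by
    rw [hsplit, Matrix.exp_add_of_commute _ _ hcomm, hexpscal, smul_mul_assoc, one_mul,
      ← Matrix.smul_mulVec]
  have hvk : ∀ j, k ≤ j → ((t • N) ^ j).mulVec v = 0 := by
    intro j hj
    have : (N ^ j).mulVec v = 0 := by
      have : N ^ j = N ^ (j - k) * N ^ k := by rw [← pow_add]; congr 1; omega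
      rw [this, ← Matrix.mulVec_mulVec, hv, Matrix.mulVec_zero]
    rw [smul_pow, Matrix.smul_mulVec, this, smul_zero]
  have hsum := exp_mulVec_eq_sum (t • N) v k hvk
  rw [hexp, hsum, norm_smul, Complex.norm_exp]
  have hre : ((t : ℂ) * μ).re = t * μ.re := by simp [Complex.mul_re]
  rw [hre]
  refine mul_le_mul_of_nonneg_left ?_ (Real.exp_pos _).le
  refine (norm_sum_le _ _).trans ?_
  refine Finset.sum_le_sum fun j _ => ?_
  rw [smul_pow, Matrix.smul_mulVec, norm_smul, norm_smul]
  simp only [norm_inv, Real.norm_natCast, norm_pow, Real.norm_eq_abs, abs_of_nonneg ht]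
  exact le_of_eq (by rw [Nat.abs_cast]; ring)

theorem decay_single (Ac : Matrix (Fin n) (Fin n) ℂ) (μ : ℂ) (hμ : μ.re < 0)
    (v : Fin n → ℂ) (k : ℕ) (hv : ((Ac - μ • 1) ^ k).mulVec v = 0) :
    ∃ ε : ℝ, 0 < ε ∧ ∃ C : ℝ, 0 ≤ C ∧ ∀ t : ℝ, 0 ≤ t →
      ‖(NormedSpace.exp (t • Ac)).mulVec v‖ ≤ C * Real.exp (-ε * t) := by
  set δ : ℝ := -μ.re / 2 with hδdef
  have hδ0 : 0 < δ := by rw [hδdef]; linarith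
  refine ⟨δ, hδ0, ∑ j ∈ Finset.range k, δ⁻¹ ^ j * ‖((Ac - μ • 1) ^ j).mulVec v‖,
    Finset.sum_nonneg fun j _ => by positivity, fun t ht => ?_⟩
  refine (norm_exp_mulVec_le Ac μ k v hv ht).trans ?_
  rw [Finset.mul_sum, Finset.sum_mul]
  refine Finset.sum_le_sum fun j _ => ?_
  have hterm : t ^ j * (j ! : ℝ)⁻¹ ≤ Real.exp (δ * t) * δ⁻¹ ^ j := by
    have h0 : (δ * t) ^ j / (j ! : ℝ) ≤ Real.exp (δ * t) := by
      refine le_trans ?_ (Real.sum_le_exp_of_nonneg (by positivity) (j + 1))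
      exact Finset.single_le_sum (f := fun i => (δ * t) ^ i / (i ! : ℝ))
        (fun i _ => by positivity) (Finset.self_mem_range_succ j)
    have h1 : t ^ j * (j ! : ℝ)⁻¹ = ((δ * t) ^ j / (j ! : ℝ)) * δ⁻¹ ^ j := by
      rw [mul_pow]
      field_simp
      rw [mul_assoc, ← mul_pow, mul_one_div_cancel hδ0.ne', one_pow, mul_one]
    rw [h1]
    exact mul_le_mul_of_nonneg_right h0 (by positivity)
  calc Real.exp (t * μ.re) * (t ^ j * (j ! : ℝ)⁻¹ * ‖((Ac - μ • 1) ^ j).mulVec v‖)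
      ≤ Real.exp (t * μ.re) * (Real.exp (δ * t) * δ⁻¹ ^ j * ‖((Ac - μ • 1) ^ j).mulVec v‖) := by
        refine mul_le_mul_of_nonneg_left (mul_le_mul_of_nonneg_right hterm (norm_nonneg _))
          (Real.exp_pos _).le
    _ = δ⁻¹ ^ j * ‖((Ac - μ • 1) ^ j).mulVec v‖ * Real.exp (t * μ.re + δ * t) := by
        rw [Real.exp_add]; ring
    _ = δ⁻¹ ^ j * ‖((Ac - μ • 1) ^ j).mulVec v‖ * Real.exp (-δ * t) := by
        congr 2
        rw [hδdef]; ring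

theorem decay_aux (A : Matrix (Fin n) (Fin n) ℝ) (hA : IsHurwitz A) (v : Fin n → ℂ) :
    ∃ ε : ℝ, 0 < ε ∧ ∃ C : ℝ, 0 ≤ C ∧ ∀ t : ℝ, 0 ≤ t →
      ‖(NormedSpace.exp (t • A.map Complex.ofReal)).mulVec v‖ ≤ C * Real.exp (-ε * t) := by
  set Ac : Matrix (Fin n) (Fin n) ℂ := A.map Complex.ofReal with hAc
  set f : Module.End ℂ (Fin n → ℂ) := Matrix.toLinAlgEquiv' Ac with hf
  have hv : v ∈ ⨆ μ : ℂ, f.maxGenEigenspace μ := by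
    rw [Module.End.iSup_maxGenEigenspace_eq_top f]; trivial
  refine Submodule.iSup_induction (motive := fun w => ∃ ε : ℝ, 0 < ε ∧ ∃ C : ℝ, 0 ≤ C ∧
      ∀ t : ℝ, 0 ≤ t → ‖(NormedSpace.exp (t • Ac)).mulVec w‖ ≤ C * Real.exp (-ε * t)) _ hv ?_ ?_ ?_
  · intro μ w hw
    by_cases hw0 : w = 0
    · exact ⟨1, one_pos, 0, le_rfl, fun t ht => by simp [hw0, Matrix.mulVec_zero]⟩
    obtain ⟨k, hk⟩ := (Module.End.mem_maxGenEigenspace f μ w).mp hw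
    have halg : ∀ m : ℕ, (Matrix.toLinAlgEquiv' (((Ac - μ • 1) ^ m) :
        Matrix (Fin n) (Fin n) ℂ) : Module.End ℂ (Fin n → ℂ)) = (f - μ • 1) ^ m := by
      intro m
      rw [map_pow, map_sub, hf]
      congr 2
      rw [← Algebra.algebraMap_eq_smul_one, AlgEquiv.commutes, Algebra.algebraMap_eq_smul_one]
    have hmat : ((Ac - μ • 1) ^ k).mulVec w = 0 := by
      rw [← Matrix.toLinAlgEquiv'_apply, halg k]
      exact hk
    have hmem : w ∈ f.genEigenspace μ k := by
      rw [Module.End.mem_genEigenspace]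
      exact ⟨k, le_rfl, by simpa using hk⟩
    have heig : f.HasEigenvalue μ := by
      refine Module.End.hasEigenvalue_of_hasGenEigenvalue (k := k) ?_
      intro hbot
      rw [hbot] at hmem
      exact hw0 (Submodule.mem_bot ℂ |>.mp hmem)
    obtain ⟨u, hu⟩ := heig.exists_hasEigenvector
    have hμ : μ.re < 0 := by
      refine hA μ ⟨u, hu.2, ?_⟩
      rw [← hAc, ← Matrix.toLinAlgEquiv'_apply, ← hf]
      exact hu.apply_eq_smul
    exact decay_single Ac μ hμ w k hmat
  · exact ⟨1, one_pos, 0, le_rfl, fun t ht => by simp [Matrix.mulVec_zero]⟩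
  · rintro x y ⟨ε₁, hε₁, C₁, hC₁, h₁⟩ ⟨ε₂, hε₂, C₂, hC₂, h₂⟩
    refine ⟨min ε₁ ε₂, lt_min hε₁ hε₂, C₁ + C₂, by positivity, fun t ht => ?_⟩
    rw [Matrix.mulVec_add]
    refine (norm_add_le _ _).trans ?_
    have e1 : Real.exp (-ε₁ * t) ≤ Real.exp (-min ε₁ ε₂ * t) :=
      Real.exp_le_exp.2 (by nlinarith [min_le_left ε₁ ε₂])
    have e2 : Real.exp (-ε₂ * t) ≤ Real.exp (-min ε₁ ε₂ * t) :=
      Real.exp_le_exp.2 (by nlinarith [min_le_right ε₁ ε₂])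
    rw [add_mul]
    exact add_le_add ((h₁ t ht).trans (mul_le_mul_of_nonneg_left e1 hC₁))
      ((h₂ t ht).trans (mul_le_mul_of_nonneg_left e2 hC₂))

theorem exp_map_ofReal (A : Matrix (Fin n) (Fin n) ℝ) (t : ℝ) :
    NormedSpace.exp (t • A.map Complex.ofReal) = (NormedSpace.exp (t • A)).map Complex.ofReal := by
  letI : SeminormedRing (Matrix (Fin n) (Fin n) ℝ) := Matrix.linftyOpSemiNormedRing
  letI : NormedRing (Matrix (Fin n) (Fin n) ℝ) := Matrix.linftyOpNormedRing
  letI : NormedAlgebra ℝ (Matrix (Fin n) (Fin n) ℝ) := Matrix.linftyOpNormedAlgebra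
  letI : SeminormedRing (Matrix (Fin n) (Fin n) ℂ) := Matrix.linftyOpSemiNormedRing
  letI : NormedRing (Matrix (Fin n) (Fin n) ℂ) := Matrix.linftyOpNormedRing
  letI : NormedAlgebra ℝ (Matrix (Fin n) (Fin n) ℂ) := Matrix.linftyOpNormedAlgebra
  letI : NormedAlgebra ℚ (Matrix (Fin n) (Fin n) ℝ) := Matrix.linftyOpNormedAlgebra
  have hcont : Continuous (⇑(Complex.ofRealHom.mapMatrix :
      Matrix (Fin n) (Fin n) ℝ →+* Matrix (Fin n) (Fin n) ℂ)) := by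
    exact
      (continuous_id (X := Matrix (Fin n) (Fin n) ℝ)).matrix_map Complex.continuous_ofReal
  have hsm : t • A.map Complex.ofReal
      = Complex.ofRealHom.mapMatrix (t • A) := by
    ext i j
    simp [Matrix.map_apply, Complex.real_smul]
  rw [hsm]
  erw [← map_exp _ hcont, RingHom.mapMatrix_apply]
  rfl

theorem norm_mulVec_ofReal (M : Matrix (Fin n) (Fin n) ℝ) (x : Fin n → ℝ) :
    ‖(M.map Complex.ofReal).mulVec (fun i => (x i : ℂ))‖ = ‖M.mulVec x‖ := by
  have h : (M.map Complex.ofReal).mulVec (fun i => (x i : ℂ))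
      = fun i => ((M.mulVec x i : ℝ) : ℂ) := by
    funext i
    simp only [Matrix.mulVec, dotProduct, Matrix.map_apply]
    push_cast
    rfl
  rw [h]
  simp [Pi.norm_def, Complex.nnnorm_real]

theorem decay_real (A : Matrix (Fin n) (Fin n) ℝ) (hA : IsHurwitz A) (x : Fin n → ℝ) :
    ∃ ε : ℝ, 0 < ε ∧ ∃ C : ℝ, 0 ≤ C ∧ ∀ t : ℝ, 0 ≤ t →
      ‖(NormedSpace.exp (t • A)).mulVec x‖ ≤ C * Real.exp (-ε * t) := by
  obtain ⟨ε, hε, C, hC, h⟩ := decay_aux A hA (fun i => (x i : ℂ))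
  refine ⟨ε, hε, C, hC, fun t ht => ?_⟩
  have := h t ht
  rwa [exp_map_ofReal, norm_mulVec_ofReal] at this

/-- The fundamental flow vector. -/
noncomputable def Xv (A : Matrix (Fin n) (Fin n) ℝ) (x : Fin n → ℝ) (t : ℝ) : Fin n → ℝ :=
  (NormedSpace.exp (t • A)).mulVec x

/-- The quadratic integrand. -/
noncomputable def qf (A : Matrix (Fin n) (Fin n) ℝ) (x y : Fin n → ℝ) (t : ℝ) : ℝ :=
  Xv A x t ⬝ᵥ Xv A y t

theorem hasDerivAt_Xv (A : Matrix (Fin n) (Fin n) ℝ) (x : Fin n → ℝ) (t : ℝ) :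
    HasDerivAt (Xv A x) (Xv A (A.mulVec x) t) t := by
  letI : SeminormedRing (Matrix (Fin n) (Fin n) ℝ) := Matrix.linftyOpSemiNormedRing
  letI : NormedRing (Matrix (Fin n) (Fin n) ℝ) := Matrix.linftyOpNormedRing
  letI : NormedAlgebra ℝ (Matrix (Fin n) (Fin n) ℝ) := Matrix.linftyOpNormedAlgebra
  have h := hasDerivAt_exp_smul_const (𝕂 := ℝ) A t
  have h2 := ((evR x).toContinuousLinearMap).hasFDerivAt.comp_hasDerivAt t h
  have h3 : Xv A (A.mulVec x) t = (evR x).toContinuousLinearMap (NormedSpace.exp (t • A) * A) := by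
    simp only [LinearMap.coe_toContinuousLinearMap', evR, LinearMap.coe_mk, AddHom.coe_mk, Xv]
    rw [Matrix.mulVec_mulVec]
  rw [h3]
  exact h2


theorem continuous_Xv (A : Matrix (Fin n) (Fin n) ℝ) (x : Fin n → ℝ) : Continuous (Xv A x) :=
  continuous_iff_continuousAt.2 fun t => (hasDerivAt_Xv A x t).continuousAt

theorem hasDerivAt_qf (A : Matrix (Fin n) (Fin n) ℝ) (x y : Fin n → ℝ) (t : ℝ) :
    HasDerivAt (qf A x y) (qf A (A.mulVec x) y t + qf A x (A.mulVec y) t) t := by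
  have hcoord : ∀ (z : Fin n → ℝ) (i : Fin n),
      HasDerivAt (fun s => Xv A z s i) (Xv A (A.mulVec z) t i) t := by
    intro z i
    exact (ContinuousLinearMap.proj i : (Fin n → ℝ) →L[ℝ] ℝ).hasFDerivAt.comp_hasDerivAt t
      (hasDerivAt_Xv A z t)
  have key : HasDerivAt (fun s => ∑ i, Xv A x s i * Xv A y s i)
      (∑ i, (Xv A (A.mulVec x) t i * Xv A y t i + Xv A x t i * Xv A (A.mulVec y) t i)) t :=
    HasDerivAt.fun_sum fun i _ => (hcoord x i).mul (hcoord y i)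
  have h2 : qf A (A.mulVec x) y t + qf A x (A.mulVec y) t
      = ∑ i, (Xv A (A.mulVec x) t i * Xv A y t i + Xv A x t i * Xv A (A.mulVec y) t i) := by
    simp [qf, dotProduct, Finset.sum_add_distrib]
  rw [h2]
  exact key

theorem continuous_qf (A : Matrix (Fin n) (Fin n) ℝ) (x y : Fin n → ℝ) :
    Continuous (qf A x y) :=
  continuous_iff_continuousAt.2 fun t => (hasDerivAt_qf A x y t).continuousAt

theorem abs_dot_le (u w : Fin n → ℝ) : |u ⬝ᵥ w| ≤ (n : ℝ) * ‖u‖ * ‖w‖ := by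
  calc |u ⬝ᵥ w| ≤ ∑ i, |u i * w i| := Finset.abs_sum_le_sum_abs _ _
    _ ≤ ∑ _i : Fin n, ‖u‖ * ‖w‖ := by
        refine Finset.sum_le_sum fun i _ => ?_
        rw [abs_mul]
        refine mul_le_mul ?_ ?_ (abs_nonneg _) (norm_nonneg _)
        · exact (Real.norm_eq_abs _) ▸ norm_le_pi_norm u i
        · exact (Real.norm_eq_abs _) ▸ norm_le_pi_norm w i
    _ = (n : ℝ) * ‖u‖ * ‖w‖ := by
        simp [Finset.sum_const, Finset.card_univ, mul_assoc]

theorem decay_qf (A : Matrix (Fin n) (Fin n) ℝ) (hA : IsHurwitz A) (x y : Fin n → ℝ) :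
    ∃ ε : ℝ, 0 < ε ∧ ∃ C : ℝ, 0 ≤ C ∧ ∀ t : ℝ, 0 ≤ t →
      |qf A x y t| ≤ C * Real.exp (-ε * t) := by
  obtain ⟨ε₁, hε₁, C₁, hC₁, h₁⟩ := decay_real A hA x
  obtain ⟨ε₂, hε₂, C₂, hC₂, h₂⟩ := decay_real A hA y
  refine ⟨ε₁ + ε₂, by positivity, (n : ℝ) * C₁ * C₂, by positivity, fun t ht => ?_⟩
  have hx := h₁ t ht
  have hy := h₂ t ht
  calc |qf A x y t| ≤ (n : ℝ) * ‖Xv A x t‖ * ‖Xv A y t‖ := abs_dot_le _ _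
    _ ≤ (n : ℝ) * (C₁ * Real.exp (-ε₁ * t)) * (C₂ * Real.exp (-ε₂ * t)) := by
        have hn : (0:ℝ) ≤ (n : ℝ) := Nat.cast_nonneg n
        have := mul_le_mul (mul_le_mul_of_nonneg_left hx hn) hy (norm_nonneg _)
          (by positivity)
        simpa [mul_assoc, Xv] using this
    _ = (n : ℝ) * C₁ * C₂ * Real.exp (-(ε₁ + ε₂) * t) := by
        rw [show -(ε₁ + ε₂) * t = -ε₁ * t + -ε₂ * t by ring, Real.exp_add]
        ring

theorem integrable_qf (A : Matrix (Fin n) (Fin n) ℝ) (hA : IsHurwitz A) (x y : Fin n → ℝ) :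
    IntegrableOn (qf A x y) (Ioi (0 : ℝ)) := by
  obtain ⟨ε, hε, C, hC, h⟩ := decay_qf A hA x y
  refine Integrable.mono' ((exp_neg_integrableOn_Ioi 0 hε).const_mul C)
    ((continuous_qf A x y).aestronglyMeasurable.restrict) ?_
  filter_upwards [ae_restrict_mem measurableSet_Ioi] with t ht
  rw [Real.norm_eq_abs]
  exact h t ht.le

theorem tendsto_qf (A : Matrix (Fin n) (Fin n) ℝ) (hA : IsHurwitz A) (x y : Fin n → ℝ) :
    Tendsto (qf A x y) atTop (nhds 0) := by
  obtain ⟨ε, hε, C, hC, h⟩ := decay_qf A hA x y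
  have hg : Tendsto (fun t => C * Real.exp (-ε * t)) atTop (nhds 0) := by
    have h1 : Tendsto (fun t : ℝ => ε * t) atTop atTop :=
      Tendsto.const_mul_atTop hε tendsto_id
    have h2 : Tendsto (fun t : ℝ => Real.exp (-(ε * t))) atTop (nhds 0) :=
      Real.tendsto_exp_neg_atTop_nhds_zero.comp h1
    have h3 := h2.const_mul C
    simpa [neg_mul] using h3
  refine squeeze_zero_norm' ?_ hg
  filter_upwards [eventually_ge_atTop (0:ℝ)] with t ht
  rw [Real.norm_eq_abs]
  exact h t ht

theorem qf_zero (A : Matrix (Fin n) (Fin n) ℝ) (x y : Fin n → ℝ) : qf A x y 0 = x ⬝ᵥ y := by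
  simp [qf, Xv, exp_zero]

/-- The Lyapunov matrix. -/
noncomputable def Pmat (A : Matrix (Fin n) (Fin n) ℝ) : Matrix (Fin n) (Fin n) ℝ :=
  Matrix.of fun i j => ∫ t in Ioi (0 : ℝ), qf A (Pi.single i 1) (Pi.single j 1) t

theorem qf_bilin (A : Matrix (Fin n) (Fin n) ℝ) (x y : Fin n → ℝ) (t : ℝ) :
    qf A x y t = ∑ i, ∑ j, x i * y j * qf A (Pi.single i 1) (Pi.single j 1) t := by
  simp only [qf, Xv]
  set M := NormedSpace.exp (t • A) with hM
  have hsingle : ∀ i : Fin n, M *ᵥ Pi.single i 1 = fun l => M l i := by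
    intro i; funext l
    simp [Matrix.mulVec, dotProduct, Pi.single_apply]
  have h1 : (M *ᵥ x) ⬝ᵥ (M *ᵥ y) = ∑ i, ∑ j, ∑ l, (M l i * x i) * (M l j * y j) := by
    simp only [dotProduct, Matrix.mulVec, Finset.sum_mul_sum]
    rw [Finset.sum_comm]
    exact Finset.sum_congr rfl fun i _ => Finset.sum_comm
  rw [h1]
  refine Finset.sum_congr rfl fun i _ => Finset.sum_congr rfl fun j _ => ?_
  rw [hsingle i, hsingle j]
  simp only [dotProduct]
  rw [Finset.mul_sum]
  exact Finset.sum_congr rfl fun l _ => by ring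

theorem dot_self_pos {x : Fin n → ℝ} (hx : x ≠ 0) : 0 < x ⬝ᵥ x := by
  simp only [dotProduct]
  obtain ⟨i, hi⟩ := Function.ne_iff.mp hx
  have hpos : 0 < x i * x i := mul_self_pos.mpr (by simpa using hi)
  exact Finset.sum_pos' (fun j _ => mul_self_nonneg _) ⟨i, Finset.mem_univ i, hpos⟩

theorem dot_Pmat (A : Matrix (Fin n) (Fin n) ℝ) (hA : IsHurwitz A) (x y : Fin n → ℝ) :
    x ⬝ᵥ (Pmat A).mulVec y = ∫ t in Ioi (0 : ℝ), qf A x y t := by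
  have hint : ∀ i j : Fin n,
      IntegrableOn (fun t => qf A (Pi.single i 1) (Pi.single j 1) t) (Ioi (0:ℝ)) := fun i j =>
    integrable_qf A hA _ _
  have key : x ⬝ᵥ (Pmat A).mulVec y
      = ∑ i, ∑ j, x i * y j * ∫ t in Ioi (0:ℝ), qf A (Pi.single i 1) (Pi.single j 1) t := by
    simp only [Pmat, dotProduct, Matrix.mulVec, Matrix.of_apply]
    refine Finset.sum_congr rfl fun i _ => ?_
    rw [Finset.mul_sum]
    exact Finset.sum_congr rfl fun j _ => by ring
  rw [key]
  have h2 : ∀ i j : Fin n,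
      x i * y j * ∫ t in Ioi (0:ℝ), qf A (Pi.single i 1) (Pi.single j 1) t
      = ∫ t in Ioi (0:ℝ), x i * y j * qf A (Pi.single i 1) (Pi.single j 1) t := fun i j =>
    (integral_const_mul _ _).symm
  simp_rw [h2]
  have h3 : ∀ i : Fin n,
      (∑ j, ∫ t in Ioi (0:ℝ), x i * y j * qf A (Pi.single i 1) (Pi.single j 1) t)
      = ∫ t in Ioi (0:ℝ), ∑ j, x i * y j * qf A (Pi.single i 1) (Pi.single j 1) t := fun i =>
    (integral_finset_sum _ fun j _ => ((hint i j).const_mul _)).symm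
  simp_rw [h3]
  rw [← integral_finset_sum _ fun i _ =>
    (integrable_finset_sum _ fun j _ => ((hint i j).const_mul _))]
  exact setIntegral_congr_fun measurableSet_Ioi fun t _ => (qf_bilin A x y t).symm

theorem lyap_integral (A : Matrix (Fin n) (Fin n) ℝ) (hA : IsHurwitz A) (x : Fin n → ℝ) :
    ∫ t in Ioi (0 : ℝ), (qf A (A.mulVec x) x t + qf A x (A.mulVec x) t) = -(x ⬝ᵥ x) := by
  have hderiv : ∀ t ∈ Ici (0:ℝ),
      HasDerivAt (qf A x x) (qf A (A.mulVec x) x t + qf A x (A.mulVec x) t) t := fun t _ =>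
    hasDerivAt_qf A x x t
  have hint : IntegrableOn (fun t => qf A (A.mulVec x) x t + qf A x (A.mulVec x) t)
      (Ioi (0:ℝ)) := (integrable_qf A hA _ _).add (integrable_qf A hA _ _)
  have htend : Tendsto (qf A x x) atTop (nhds 0) := tendsto_qf A hA x x
  have h := integral_Ioi_of_hasDerivAt_of_tendsto'
    (f' := fun t => qf A (A.mulVec x) x t + qf A x (A.mulVec x) t) hderiv hint htend
  rw [h, qf_zero, zero_sub]

end LyapunovAux

/-- If `A` is Hurwitz, then there exists a symmetric positive definite matrix `P`
such that `AᵀP + PA` is negative definite. -/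
theorem stmt0 {n : ℕ} (A : Matrix (Fin n) (Fin n) ℝ) (hA : IsHurwitz A) :
    ∃ P : Matrix (Fin n) (Fin n) ℝ, P.IsSymm ∧ PosDefQ P ∧ NegDefQ (Aᵀ * P + P * A) := by
  classical
  open LyapunovAux MeasureTheory Set Filter in
  refine ⟨LyapunovAux.Pmat A, ?_, ?_, ?_⟩
  · -- symmetry
    ext i j
    rw [Matrix.transpose_apply]
    simp only [LyapunovAux.Pmat, Matrix.of_apply]
    refine setIntegral_congr_fun measurableSet_Ioi fun t _ => ?_
    simp only [LyapunovAux.qf]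
    exact dotProduct_comm _ _
  · -- positive definiteness
    intro x hx
    rw [LyapunovAux.dot_Pmat A hA x x]
    have hnn : ∀ t : ℝ, 0 ≤ LyapunovAux.qf A x x t := fun t => by
      simp only [LyapunovAux.qf, dotProduct]
      exact Finset.sum_nonneg fun i _ => mul_self_nonneg _
    have hg0 : 0 < LyapunovAux.qf A x x 0 := by
      rw [LyapunovAux.qf_zero]
      exact LyapunovAux.dot_self_pos hx
    have hcont : ContinuousAt (LyapunovAux.qf A x x) 0 :=
      (LyapunovAux.continuous_qf A x x).continuousAt
    obtain ⟨δ, hδ0, hδ⟩ := Metric.mem_nhds_iff.mp (hcont (lt_mem_nhds hg0))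
    rw [MeasureTheory.setIntegral_pos_iff_support_of_nonneg_ae
      (Filter.Eventually.of_forall fun t => hnn t) (LyapunovAux.integrable_qf A hA x x)]
    refine lt_of_lt_of_le ?_ (measure_mono
      (?_ : Ioo 0 δ ⊆ Function.support (LyapunovAux.qf A x x) ∩ Ioi 0))
    · rw [Real.volume_Ioo]
      simp only [sub_zero]
      exact ENNReal.ofReal_pos.mpr hδ0
    · rintro t ⟨ht0, htδ⟩
      refine ⟨ne_of_gt (hδ ?_), ht0⟩
      rw [Metric.mem_ball, Real.dist_eq, sub_zero, abs_of_pos ht0]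
      exact htδ
  · -- negative definiteness
    intro x hx
    have h1 : x ⬝ᵥ ((Aᵀ * LyapunovAux.Pmat A + LyapunovAux.Pmat A * A).mulVec x)
        = (A.mulVec x) ⬝ᵥ (LyapunovAux.Pmat A).mulVec x
          + x ⬝ᵥ (LyapunovAux.Pmat A).mulVec (A.mulVec x) := by
      rw [Matrix.add_mulVec, dotProduct_add]
      congr 1
      · rw [← Matrix.mulVec_mulVec, dotProduct_mulVec, Matrix.vecMul_transpose]
      · rw [← Matrix.mulVec_mulVec]
    have h2 : (A.mulVec x) ⬝ᵥ (LyapunovAux.Pmat A).mulVec x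
        + x ⬝ᵥ (LyapunovAux.Pmat A).mulVec (A.mulVec x) = -(x ⬝ᵥ x) := by
      rw [LyapunovAux.dot_Pmat A hA _ x, LyapunovAux.dot_Pmat A hA x _,
        ← LyapunovAux.lyap_integral A hA x,
        ← MeasureTheory.integral_add (LyapunovAux.integrable_qf A hA _ _)
          (LyapunovAux.integrable_qf A hA _ _)]
    rw [h1, h2, neg_lt, neg_zero]
    exact LyapunovAux.dot_self_pos hx
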